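/- Let p be an odd prime, let γ, c₁ ∈ 𝔽̄_p[t] with c₁ ≠ 0 and deg(γ + c₁) > 0, and let φ = (x − γ)² − c₁ with adjusted post-critical orbit (cₙ). Let D ∈ 𝔽̄_p[t] be such that c₁ + D ≠ 0, and let n ∈ ℕ satisfy deg(γ + c₁) · 2^{n−2} > deg(c₁ + D). Then cₙ − D is not a square in 𝔽̄_p(t). -/

import Mathlib

open Polynomial

lemma deg_aux {K : Type*} [Field K] (γ c₁ : Polynomial K)
    (hd : 0 < (γ + c₁).natDegree) :
    ∀ k : ℕ, (((fun x => (x - γ) ^ 2 - c₁)^[k + 1] γ) - γ).natDegree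
      = (γ + c₁).natDegree * 2 ^ k := by
  intro k
  induction k with
  | zero =>
    have h1 : ((fun x => (x - γ) ^ 2 - c₁)^[0 + 1] γ) - γ = -(γ + c₁) := by
      rw [zero_add, Function.iterate_one]
      show (γ - γ) ^ 2 - c₁ - γ = -(γ + c₁)
      ring
    rw [h1, natDegree_neg, pow_zero, mul_one]
  | succ k ih =>
    rw [Function.iterate_succ_apply']
    have h1 : ((fun x => (x - γ) ^ 2 - c₁) ((fun x => (x - γ) ^ 2 - c₁)^[k + 1] γ)) - γ
        = (((fun x => (x - γ) ^ 2 - c₁)^[k + 1] γ) - γ) ^ 2 - (γ + c₁) := by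
      simp only
      ring
    rw [h1]
    have hlt : (γ + c₁).natDegree
        < ((((fun x => (x - γ) ^ 2 - c₁)^[k + 1] γ) - γ) ^ 2).natDegree := by
      rw [natDegree_pow, ih]
      have h2 : 1 ≤ 2 ^ k := Nat.one_le_two_pow
      nlinarith
    rw [natDegree_sub_eq_left_of_natDegree_lt hlt, natDegree_pow, ih]
    ring

/-- Let `p` be an odd prime, `γ, c₁ ∈ 𝔽̄_p[t]` with `c₁ ≠ 0` and
`deg (γ + c₁) > 0`, and `φ = (x - γ)² - c₁` with adjusted post-critical orbit `(cₙ)`.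
If `D ∈ 𝔽̄_p[t]` satisfies `c₁ + D ≠ 0` and `n` satisfies
`deg (γ + c₁) · 2^(n-2) > deg (c₁ + D)`, then `cₙ - D` is not a square in `𝔽̄_p(t)`. -/
theorem stmt_1 (p : ℕ) [Fact p.Prime] (hodd : p ≠ 2)
    (γ c₁ : Polynomial (AlgebraicClosure (ZMod p)))
    (hc₁ : c₁ ≠ 0) (hiso : 0 < (γ + c₁).natDegree)
    (c : ℕ → Polynomial (AlgebraicClosure (ZMod p)))
    (hc1 : c 1 = c₁)
    (hcn : ∀ m, 2 ≤ m → c m = (fun x => (x - γ) ^ 2 - c₁)^[m] γ)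
    (D : Polynomial (AlgebraicClosure (ZMod p))) (hD : c₁ + D ≠ 0)
    (n : ℕ) (hn : 2 ≤ n)
    (hbig : (c₁ + D).natDegree < (γ + c₁).natDegree * 2 ^ (n - 2)) :
    ¬ ∃ s : RatFunc (AlgebraicClosure (ZMod p)),
        s ^ 2 = algebraMap (Polynomial (AlgebraicClosure (ZMod p)))
          (RatFunc (AlgebraicClosure (ZMod p))) (c n - D) := by
  set K := AlgebraicClosure (ZMod p) with hK
  rintro ⟨s, hs⟩
  -- s is integral over K[X], hence a polynomial
  have hint : IsIntegral (Polynomial K) s := by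
    refine ⟨X ^ 2 - C (c n - D), monic_X_pow_sub_C _ two_ne_zero, ?_⟩
    simp [eval₂_sub, eval₂_pow, hs]
    exact sub_self _
  obtain ⟨r, hr⟩ := IsIntegrallyClosed.isIntegral_iff.mp hint
  have hr2 : r ^ 2 = c n - D := by
    apply IsFractionRing.injective (Polynomial K) (RatFunc K)
    rw [map_pow, hr, hs]
  obtain ⟨m, hm⟩ : ∃ m, n = m + 2 := ⟨n - 2, by omega⟩
  have hcne : c n = (fun x => (x - γ) ^ 2 - c₁)^[n] γ := hcn n hn
  set u : Polynomial K := ((fun x => (x - γ) ^ 2 - c₁)^[m + 1] γ) - γ with hu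
  have hdu : u.natDegree = (γ + c₁).natDegree * 2 ^ m := deg_aux γ c₁ hiso m
  have hune : u ≠ 0 := by
    intro h
    rw [h, natDegree_zero] at hdu
    have : 0 < (γ + c₁).natDegree * 2 ^ m := by positivity
    omega
  have hcnu : c n = u ^ 2 - γ - c₁ + γ := by
    rw [hcne, hm, Function.iterate_succ_apply']
    simp only [hu]
    ring
  -- difference of squares factorization
  have hfact : (u - r) * (u + r) = c₁ + D := by
    have : (u - r) * (u + r) = u ^ 2 - r ^ 2 := by ring
    rw [this, hr2, hcnu]
    ring
  have h1 : u - r ≠ 0 := by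
    intro h
    rw [h, zero_mul] at hfact
    exact hD hfact.symm
  have h2 : u + r ≠ 0 := by
    intro h
    rw [h, mul_zero] at hfact
    exact hD hfact.symm
  have hsum : (u - r) + (u + r) = C 2 * u := by
    have hC2 : (C (2 : K) : Polynomial K) = 2 := map_ofNat C 2
    rw [hC2]
    ring
  have h2K : (2 : K) ≠ 0 := by
    haveI : CharP K p := by infer_instance
    intro h
    have h' : ((2 : ℕ) : K) = 0 := by exact_mod_cast h
    have hd2 : p ∣ 2 := (CharP.cast_eq_zero_iff K p 2).mp h'
    rcases (Nat.prime_two.eq_one_or_self_of_dvd p hd2) with h'' | h''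
    · exact (Fact.out : p.Prime).one_lt.ne' h''
    · exact hodd h''
  have hmul : ((u - r) * (u + r)).natDegree = (u - r).natDegree + (u + r).natDegree :=
    natDegree_mul h1 h2
  have hle : u.natDegree ≤ (u - r).natDegree + (u + r).natDegree := by
    have h3 := natDegree_add_le (u - r) (u + r)
    rw [hsum, natDegree_C_mul h2K] at h3
    exact h3.trans (max_le (Nat.le_add_right _ _) (Nat.le_add_left _ _))
  have hfinal : u.natDegree ≤ (c₁ + D).natDegree := by
    rw [← hfact, hmul]
    exact hle
  rw [hdu] at hfinal
  have : n - 2 = m := by omega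
  rw [this] at hbig
  omega
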